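/- (Wildberger–Rubine Geode theorem.) There exists a formal power series G ∈ R such that S − 1 = G·S_1; moreover G is unique, since R is an integral domain and S_1 ≠ 0. -/

import Mathlib

/- `R = MvPowerSeries ℕ ℚ`, with the product (coefficientwise) topology. -/
noncomputable instance : TopologicalSpace (MvPowerSeries ℕ ℚ) :=
  inferInstanceAs (TopologicalSpace ((ℕ →₀ ℕ) → ℚ))

open MvPowerSeries

namespace GeodeAux

abbrev R := MvPowerSeries ℕ ℚ

instance : T2Space R := inferInstanceAs (T2Space ((ℕ →₀ ℕ) → ℚ))
instance : ContinuousAdd R := inferInstanceAs (ContinuousAdd ((ℕ →₀ ℕ) → ℚ))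

lemma coeff_apply (φ : R) (d : ℕ →₀ ℕ) : coeff d φ = φ d := rfl

lemma coeff_X_mul_eq_zero (A : R) (m : ℕ) (d : ℕ →₀ ℕ) (hd : d m = 0) :
    coeff d (X m * A) = 0 := by
  rw [coeff_mul]
  apply Finset.sum_eq_zero
  rintro ⟨u, v⟩ huv
  simp only [Finset.HasAntidiagonal.mem_antidiagonal] at huv
  rw [coeff_X]
  split_ifs with h
  · exfalso
    have hu : u m = 1 := by
      have hh : u = Finsupp.single m 1 := h
      rw [hh]; simp
    have h2 : u m + v m = d m := by rw [← huv]; rfl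
    omega
  · simp

lemma summable_X_mul (A : ℕ → R) : Summable (fun n => X (n + 1) * A n) := by
  refine Pi.summable.2 ?_
  intro d
  apply summable_of_ne_finset_zero (s := d.support.image (fun m => m - 1))
  intro n hn
  show coeff d (X (n + 1) * A n) = 0
  apply coeff_X_mul_eq_zero
  by_contra h
  exact hn (Finset.mem_image.2 ⟨n + 1, Finsupp.mem_support_iff.2 h, rfl⟩)

lemma coeff_tsum (f : ℕ → R) (hf : Summable f) (d : ℕ →₀ ℕ) :
    coeff d (∑' n, f n) = ∑' n, coeff d (f n) :=
  tsum_apply hf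

lemma tsum_mul (f : ℕ → R) (c : R) (hf : Summable f)
    (hfc : Summable (fun n => f n * c)) : (∑' n, f n) * c = ∑' n, f n * c := by
  ext d
  rw [coeff_tsum _ hfc, coeff_mul]
  have : ∀ p ∈ Finset.HasAntidiagonal.antidiagonal d,
      coeff p.1 (∑' n, f n) * coeff p.2 c = ∑' n, coeff p.1 (f n) * coeff p.2 c := by
    intro p _
    rw [coeff_tsum _ hf]
    exact (Summable.tsum_mul_right _ (Pi.summable.1 hf p.1)).symm
  rw [Finset.sum_congr rfl this, ← Summable.tsum_finsetSum]
  · exact tsum_congr fun n => (coeff_mul d (f n) c).symm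
  · intro p _
    exact (Pi.summable.1 hf p.1).mul_right _

end GeodeAux

open GeodeAux


/-- (Wildberger–Rubine Geode theorem.) If `S` is the formal power series satisfying
`S = 1 + ∑_{n ≥ 1} t_n · S ^ n`, and `S₁ = ∑_{n ≥ 1} t_n`, then there exists exactly
one `G ∈ R` with `S - 1 = G · S₁`. -/
theorem geode_stmt1 (S : MvPowerSeries ℕ ℚ)
    (hS : S = 1 + ∑' n : ℕ, (X (n + 1) : MvPowerSeries ℕ ℚ) * S ^ (n + 1)) :
    ∃! G : MvPowerSeries ℕ ℚ,
      S - 1 = G * ∑' n : ℕ, (X (n + 1) : MvPowerSeries ℕ ℚ) := by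
  set S₁ : MvPowerSeries ℕ ℚ := ∑' n : ℕ, (X (n + 1) : MvPowerSeries ℕ ℚ) with hS₁
  set g : ℕ → MvPowerSeries ℕ ℚ := fun n => ∑ k ∈ Finset.range (n + 1), S ^ k with hg
  set T : MvPowerSeries ℕ ℚ := ∑' n : ℕ, X (n + 1) * g n with hT
  have hsum1 : Summable (fun n : ℕ => (X (n + 1) : MvPowerSeries ℕ ℚ)) := by
    simpa using summable_X_mul (fun _ => (1 : MvPowerSeries ℕ ℚ))
  have hsumT : Summable (fun n : ℕ => (X (n + 1) : MvPowerSeries ℕ ℚ) * g n) :=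
    summable_X_mul g
  -- key identity: S - 1 = S₁ + T * (S - 1)
  have key : S - 1 = S₁ + T * (S - 1) := by
    have hterm : ∀ n : ℕ, (X (n + 1) : MvPowerSeries ℕ ℚ) * S ^ (n + 1)
        = X (n + 1) + (X (n + 1) * g n) * (S - 1) := by
      intro n
      have := geom_sum_mul S (n + 1)
      rw [hg]
      rw [mul_assoc, this]
      ring
    have h2 : T * (S - 1) = ∑' n : ℕ, (X (n + 1) * g n) * (S - 1) := by
      apply tsum_mul _ _ hsumT
      have : (fun n : ℕ => (X (n + 1) : MvPowerSeries ℕ ℚ) * g n * (S - 1))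
          = fun n => X (n + 1) * (g n * (S - 1)) := by
        funext n; rw [mul_assoc]
      rw [this]
      exact summable_X_mul _
    calc S - 1 = ∑' n : ℕ, (X (n + 1) : MvPowerSeries ℕ ℚ) * S ^ (n + 1) :=
          sub_eq_iff_eq_add'.mpr hS
      _ = ∑' n : ℕ, ((X (n + 1) : MvPowerSeries ℕ ℚ) + (X (n + 1) * g n) * (S - 1)) :=
          tsum_congr fun n => hterm n
      _ = S₁ + T * (S - 1) := by
          rw [h2]
          apply Summable.tsum_add hsum1
          have : (fun n : ℕ => (X (n + 1) : MvPowerSeries ℕ ℚ) * g n * (S - 1))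
              = fun n => X (n + 1) * (g n * (S - 1)) := by
            funext n; rw [mul_assoc]
          rw [this]
          exact summable_X_mul _
  have hfact : (S - 1) * (1 - T) = S₁ := by
    linear_combination key
  -- constant coefficient of T is 0
  have hcT : constantCoeff T = 1 - 1 := by
    have : constantCoeff T = coeff 0 T := rfl
    rw [this, hT, coeff_tsum _ hsumT]
    simp only [coeff_X_mul_eq_zero (g _) _ 0 rfl]
    simp
  have hc : constantCoeff (1 - T) = ((1 : ℚˣ) : ℚ) := by
    simp only [map_sub, map_one, hcT]; norm_num
  have hinv : (1 - T) * invOfUnit (1 - T) 1 = 1 := mul_invOfUnit _ 1 hc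
  have hS1ne : S₁ ≠ 0 := by
    intro h
    have : coeff (Finsupp.single 1 1) S₁ = 1 := by
      rw [hS₁, coeff_tsum _ hsum1]
      rw [tsum_eq_single 0]
      · simp [coeff_X]
      · intro n hn
        rw [coeff_X]
        rw [if_neg]
        intro hEq
        apply hn
        have := Finsupp.single_left_injective (by norm_num : (1:ℕ) ≠ 0) hEq.symm
        omega
    rw [h] at this
    simp at this
  refine ⟨invOfUnit (1 - T) 1, ?_, ?_⟩
  · calc S - 1 = (S - 1) * ((1 - T) * invOfUnit (1 - T) 1) := by rw [hinv, mul_one]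
      _ = invOfUnit (1 - T) 1 * ((S - 1) * (1 - T)) := by ring
      _ = invOfUnit (1 - T) 1 * S₁ := by rw [hfact]
  · intro G' hG'
    have h1 : S - 1 = invOfUnit (1 - T) 1 * S₁ := by
      calc S - 1 = (S - 1) * ((1 - T) * invOfUnit (1 - T) 1) := by rw [hinv, mul_one]
        _ = invOfUnit (1 - T) 1 * ((S - 1) * (1 - T)) := by ring
        _ = invOfUnit (1 - T) 1 * S₁ := by rw [hfact]
    have : G' * S₁ = invOfUnit (1 - T) 1 * S₁ := by rw [← hG', h1]
    exact mul_right_cancel₀ hS1ne this
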